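/- (The logical algebra of the pure gauge Gauss law code.) Assume the lattice is connected. For h : L → G let T^h : H → H be the electric translation operator (T^h f) a = f (fun ℓ => (h ℓ)⁻¹ * a ℓ). Then a linear map O : H → H commutes with the gauge transformation U^g for every g : V → G if and only if O lies in the complex linear span of the operators W^μ ∘ T^h, where μ : L → Ĝ ranges over families with ∂ μ = 1 and h ranges over L → G. In other words, the commutant of the gauge group is spanned exactly by the Weyl operators whose Wilson-line part has trivial Gauss law syndrome. -/
import Mathlib


open Finset

variable {V L : Type*} [Fintype V] [Fintype L] [DecidableEq V]
variable {G : Type*} [CommGroup G] [Fintype G]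

/-- The gauge transformation `U^g` on the kinematical Hilbert space `(L → G) → ℂ`. -/
def Ugauge (s t : L → V) (g : V → G) : ((L → G) → ℂ) → ((L → G) → ℂ) :=
  fun f a => f fun ℓ => (g (s ℓ))⁻¹ * a ℓ * g (t ℓ)

/-- The Wilson line (multiplication) operator `W^χ` for a family of characters `χ`. -/
def Wline (χ : L → (G →* ℂˣ)) : ((L → G) → ℂ) → ((L → G) → ℂ) :=
  fun f a => (((∏ ℓ, χ ℓ (a ℓ))⁻¹ : ℂˣ) : ℂ) • f a

/-- The Gauss law map `∂`, assigning to link character data the vertex charge it excites. -/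
def gaussMap (s t : L → V) (χ : L → (G →* ℂˣ)) : V → (G →* ℂˣ) :=
  fun v => (∏ ℓ ∈ univ.filter fun ℓ => s ℓ = v, χ ℓ) *
    ∏ ℓ ∈ univ.filter fun ℓ => t ℓ = v, (χ ℓ)⁻¹

/-- The electric translation operator `T^h`. -/
def elecTrans (h : L → G) : ((L → G) → ℂ) → ((L → G) → ℂ) :=
  fun f a => f fun ℓ => (h ℓ)⁻¹ * a ℓ

/-- The simple graph on the vertices of a lattice. -/
def latticeGraph {V' L' : Type*} (s t : L' → V') : SimpleGraph V' :=
  SimpleGraph.fromRel fun v w => ∃ ℓ, s ℓ = v ∧ t ℓ = w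


set_option linter.unusedSectionVars false
set_option linter.unusedVariables false

/-- character function on the configuration space -/
def charFun (μ : L → (G →* ℂˣ)) : (L → G) → ℂ := fun a => ∏ ℓ, (μ ℓ (a ℓ) : ℂ)

lemma sum_char_eq_zero {K : Type*} [CommGroup K] [Fintype K] {ψ : K →* ℂˣ}
    (h : ∃ k, ψ k ≠ 1) : ∑ g : K, (ψ g : ℂ) = 0 := by
  obtain ⟨k, hk⟩ := h
  have h1 : ∑ g : K, (ψ (k * g) : ℂ) = ∑ g : K, (ψ g : ℂ) :=
    Fintype.sum_equiv (Equiv.mulLeft k) _ _ (fun g => rfl)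
  simp only [map_mul, Units.val_mul, ← Finset.mul_sum] at h1
  have : ((ψ k : ℂ) - 1) * ∑ g : K, (ψ g : ℂ) = 0 := by rw [sub_mul, one_mul, h1, sub_self]
  rcases mul_eq_zero.mp this with h' | h'
  · exact absurd (Units.ext (by push_cast [sub_eq_zero] at h' ⊢; exact h')) hk
  · exact h'

lemma charFun_mul (μ ν : L → (G →* ℂˣ)) : charFun μ * charFun ν = charFun (μ * ν) := by
  funext a
  simp [charFun, ← Finset.prod_mul_distrib]

lemma charFun_one : charFun (1 : L → (G →* ℂˣ)) = 1 := by
  funext a; simp [charFun]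

/-- completeness: the characters span all functions -/
lemma span_charFun_eq_top :
    Submodule.span ℂ (Set.range (charFun : (L → (G →* ℂˣ)) → ((L → G) → ℂ))) = ⊤ := by
  classical
  rw [eq_top_iff]
  rintro φ -
  set S : Set ((L → G) → ℂ) := Set.range (charFun : (L → (G →* ℂˣ)) → ((L → G) → ℂ)) with hS
  have hmulmem : ∀ f g : (L → G) → ℂ, f ∈ Submodule.span ℂ S → g ∈ Submodule.span ℂ S →
      f * g ∈ Submodule.span ℂ S := by
    intro f g hf hg
    have := Submodule.mul_mem_mul hf hg
    rw [Submodule.span_mul_span] at this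
    refine Submodule.span_mono ?_ this
    rintro x ⟨f', ⟨μ, rfl⟩, g', ⟨ν, rfl⟩, rfl⟩
    exact ⟨μ * ν, (charFun_mul μ ν).symm⟩
  have honemem : (1 : (L → G) → ℂ) ∈ Submodule.span ℂ S :=
    Submodule.subset_span ⟨1, charFun_one⟩
  -- delta functions are in the span
  have hdelta : ∀ x : L → G,
      (fun a : L → G => if x = a then (1 : ℂ) else 0) ∈ Submodule.span ℂ S := by
    intro x
    have hsep : ∀ y : L → G, y ≠ x → ∃ f, f ∈ S ∧ f x ≠ f y := by
      intro y hy
      obtain ⟨ℓ₀, hℓ₀⟩ := Function.ne_iff.mp hy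
      obtain ⟨χ, hχ⟩ := CommGroup.exists_apply_ne_one_of_hasEnoughRootsOfUnity G ℂ
        (a := x ℓ₀ * (y ℓ₀)⁻¹) (by
          intro h; apply hℓ₀; rw [mul_inv_eq_one] at h; exact h.symm)
      refine ⟨charFun (fun ℓ => if ℓ = ℓ₀ then χ else 1), ⟨_, rfl⟩, ?_⟩
      intro heq
      apply hχ
      have key : ∀ z : L → G, charFun (fun ℓ => if ℓ = ℓ₀ then χ else 1) z = (χ (z ℓ₀) : ℂ) := by
        intro z
        rw [charFun, Finset.prod_eq_single ℓ₀ (fun b _ hb => by simp [hb])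
          (fun h => absurd (Finset.mem_univ _) h)]
        simp
      rw [key, key] at heq
      have : χ (x ℓ₀) = χ (y ℓ₀) := Units.ext heq
      rw [map_mul, this, map_inv, mul_inv_cancel]
    choose! f hfS hfne using hsep
    set g : (L → G) → ((L → G) → ℂ) :=
      fun y => (f y x - f y y)⁻¹ • (f y - (f y y) • (1 : (L → G) → ℂ)) with hg
    have hgmem : ∀ y ∈ Finset.univ.erase x, g y ∈ Submodule.span ℂ S := by
      intro y hy
      have hyx : y ≠ x := (Finset.mem_erase.mp hy).1
      exact Submodule.smul_mem _ _ (Submodule.sub_mem _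
        (Submodule.subset_span (hfS y hyx)) (Submodule.smul_mem _ _ honemem))
    have hprodmem : (∏ y ∈ Finset.univ.erase x, g y) ∈ Submodule.span ℂ S :=
      Finset.prod_induction g (· ∈ Submodule.span ℂ S) hmulmem honemem hgmem
    have hprodeq : (∏ y ∈ Finset.univ.erase x, g y)
        = (fun a : L → G => if x = a then (1 : ℂ) else 0) := by
      funext a
      rw [Finset.prod_apply]
      by_cases hax : x = a
      · subst hax
        rw [if_pos rfl]
        refine Finset.prod_eq_one (fun y hy => ?_)
        have hyx : y ≠ x := (Finset.mem_erase.mp hy).1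
        have := hfne y hyx
        simp only [hg, Pi.smul_apply, Pi.sub_apply, Pi.one_apply, smul_eq_mul, mul_one]
        field_simp [sub_ne_zero.mpr this]
      · rw [if_neg hax]
        refine Finset.prod_eq_zero (Finset.mem_erase.mpr ⟨fun h => hax h.symm, Finset.mem_univ a⟩) ?_
        simp [hg]
    rw [← hprodeq]; exact hprodmem
  have hrep : φ = ∑ x : L → G, φ x • (fun a : L → G => if x = a then (1 : ℂ) else 0) := by
    funext a
    rw [Finset.sum_apply]
    simp [Finset.sum_ite_eq]
  rw [hrep]
  exact Submodule.sum_mem _ (fun x _ => Submodule.smul_mem _ _ (hdelta x))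

lemma prod_act (s t : L → V) (μ : L → (G →* ℂˣ)) (g : V → G) (a : L → G) :
    (∏ ℓ, μ ℓ ((g (s ℓ))⁻¹ * a ℓ * g (t ℓ)) : ℂˣ)
      = (∏ v, gaussMap s t μ v (g v))⁻¹ * ∏ ℓ, μ ℓ (a ℓ) := by
  have hgauss : (∏ v, gaussMap s t μ v (g v))
      = (∏ ℓ, μ ℓ (g (s ℓ))) * (∏ ℓ, (μ ℓ (g (t ℓ)))⁻¹) := by
    simp only [gaussMap, MonoidHom.mul_apply]
    rw [Finset.prod_mul_distrib]
    congr 1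
    · rw [← Finset.prod_fiberwise_of_maps_to (g := s) (fun ℓ _ => Finset.mem_univ _)
        (fun ℓ => μ ℓ (g (s ℓ)))]
      refine Finset.prod_congr rfl fun v _ => ?_
      rw [MonoidHom.finset_prod_apply]
      exact Finset.prod_congr rfl fun ℓ hℓ => by
        rw [(Finset.mem_filter.mp hℓ).2]
    · rw [← Finset.prod_fiberwise_of_maps_to (g := t) (fun ℓ _ => Finset.mem_univ _)
        (fun ℓ => (μ ℓ (g (t ℓ)))⁻¹)]
      refine Finset.prod_congr rfl fun v _ => ?_
      rw [MonoidHom.finset_prod_apply]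
      exact Finset.prod_congr rfl fun ℓ hℓ => by
        rw [MonoidHom.inv_apply, (Finset.mem_filter.mp hℓ).2]
  rw [hgauss]
  simp only [map_mul, map_inv, Finset.prod_mul_distrib, mul_inv, inv_inv,
    Finset.prod_inv_distrib]
  group
  exact mul_right_comm _ _ _

lemma conj_eq_iff' {G : Type*} [Group G] (x y c d : G) :
    x = c⁻¹ * y * d ↔ c * x * d⁻¹ = y := by
  constructor
  · rintro rfl
    rw [mul_assoc c⁻¹ y d, mul_inv_cancel_left, mul_inv_cancel_right]
  · rintro rfl
    rw [mul_assoc c x d⁻¹, inv_mul_cancel_left, inv_mul_cancel_right]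

lemma charFun_coe (μ : L → (G →* ℂˣ)) (z : L → G) :
    charFun μ z = ((∏ ℓ, μ ℓ (z ℓ) : ℂˣ) : ℂ) := (Units.coe_prod _ _).symm

lemma invariant_mem_span (s t : L → V) (φ : (L → G) → ℂ)
    (hφ : ∀ (g : V → G) (a : L → G), φ (fun ℓ => (g (s ℓ))⁻¹ * a ℓ * g (t ℓ)) = φ a) :
    φ ∈ Submodule.span ℂ {f | ∃ μ, gaussMap s t μ = 1 ∧ f = charFun μ} := by
  classical
  set c : ℂ := (Fintype.card (V → G) : ℂ) with hc
  have hc0 : c ≠ 0 := Nat.cast_ne_zero.mpr Fintype.card_ne_zero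
  set P : ((L → G) → ℂ) → ((L → G) → ℂ) :=
    fun ψ a => c⁻¹ * ∑ g : V → G, ψ (fun ℓ => (g (s ℓ))⁻¹ * a ℓ * g (t ℓ)) with hP
  have hPφ : P φ = φ := by
    funext a
    simp only [hP]
    rw [Finset.sum_congr rfl (fun g _ => hφ g a), Finset.sum_const, Finset.card_univ,
      nsmul_eq_mul, ← hc, inv_mul_cancel_left₀ hc0]
  have hPchar : ∀ μ : L → (G →* ℂˣ),
      P (charFun μ) ∈ Submodule.span ℂ {f | ∃ μ, gaussMap s t μ = 1 ∧ f = charFun μ} := by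
    intro μ
    by_cases hμ : gaussMap s t μ = 1
    · have heq : P (charFun μ) = charFun μ := by
        funext a
        simp only [hP]
        have : ∀ g : V → G,
            charFun μ (fun ℓ => (g (s ℓ))⁻¹ * a ℓ * g (t ℓ)) = charFun μ a := by
          intro g
          rw [charFun_coe, charFun_coe, prod_act, hμ]
          simp
        rw [Finset.sum_congr rfl (fun g _ => this g), Finset.sum_const, Finset.card_univ,
          nsmul_eq_mul, ← hc, inv_mul_cancel_left₀ hc0]
      rw [heq]
      exact Submodule.subset_span ⟨μ, hμ, rfl⟩
    · set Ψ : (V → G) →* ℂˣ := MonoidHom.mk' (fun g => (∏ v, gaussMap s t μ v (g v))⁻¹)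
        (by
          intro g g'
          simp only [Pi.mul_apply, map_mul]
          rw [Finset.prod_mul_distrib, mul_inv]) with hΨ
      have hwit : ∃ g : V → G, Ψ g ≠ 1 := by
        obtain ⟨v₀, hv₀⟩ := Function.ne_iff.mp hμ
        obtain ⟨x, hx⟩ := DFunLike.ne_iff.mp hv₀
        refine ⟨fun v => if v = v₀ then x else 1, ?_⟩
        have : (∏ v, gaussMap s t μ v (if v = v₀ then x else 1)) = gaussMap s t μ v₀ x := by
          rw [Finset.prod_eq_single v₀ (fun v _ hv => by simp [hv]) (by simp)]
          simp
        simp only [hΨ, MonoidHom.mk'_apply, this, ne_eq, inv_eq_one]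
        simpa using hx
      have heq : P (charFun μ) = 0 := by
        funext a
        simp only [hP]
        have : ∀ g : V → G,
            charFun μ (fun ℓ => (g (s ℓ))⁻¹ * a ℓ * g (t ℓ)) = (Ψ g : ℂ) * charFun μ a := by
          intro g
          rw [charFun_coe, charFun_coe, prod_act, Units.val_mul, ← charFun_coe]
          rfl
        rw [Finset.sum_congr rfl (fun g _ => this g), ← Finset.sum_mul,
          sum_char_eq_zero hwit, zero_mul, mul_zero]
        rfl
      rw [heq]
      exact Submodule.zero_mem _
  -- now use that φ is in the span of all characters
  have hφtop : φ ∈ Submodule.span ℂ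
      (Set.range (charFun : (L → (G →* ℂˣ)) → ((L → G) → ℂ))) := by
    rw [span_charFun_eq_top]; trivial
  rw [← hPφ]
  refine Submodule.span_induction ?_ ?_ ?_ ?_ hφtop
  · rintro f ⟨μ, rfl⟩; exact hPchar μ
  · have : P 0 = 0 := by funext a; simp [hP]
    rw [this]; exact Submodule.zero_mem _
  · intro f f' _ _ hf hf'
    have : P (f + f') = P f + P f' := by
      funext a; simp [hP, Finset.sum_add_distrib, mul_add]
    rw [this]; exact Submodule.add_mem _ hf hf'
  · intro r f _ hf
    have : P (r • f) = r • P f := by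
      funext a
      simp only [hP, Pi.smul_apply, smul_eq_mul, ← Finset.mul_sum]
      ring
    rw [this]; exact Submodule.smul_mem _ _ hf

/-- The logical algebra of the pure gauge Gauss law code: a linear map `O` on the
kinematical Hilbert space commutes with every gauge transformation if and only if it lies
in the complex linear span of the Weyl operators `W^μ ∘ T^h` whose Wilson-line part `μ`
has trivial Gauss law syndrome. -/
theorem commutant_eq_span_weyl (s t : L → V)
    (hconn : Nonempty V ∧ (latticeGraph s t).Connected)
    (O : ((L → G) → ℂ) →ₗ[ℂ] ((L → G) → ℂ)) :
    (∀ g : V → G, ⇑O ∘ Ugauge s t g = Ugauge s t g ∘ ⇑O) ↔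
      ⇑O ∈ Submodule.span ℂ
        {F : ((L → G) → ℂ) → ((L → G) → ℂ) |
          ∃ μ : L → (G →* ℂˣ), ∃ h : L → G,
            gaussMap s t μ = 1 ∧ F = Wline μ ∘ elecTrans h} := by

  classical
  constructor
  · -- hard direction
    intro hcomm
    set δ : (L → G) → ((L → G) → ℂ) := fun b a => if b = a then (1 : ℂ) else 0 with hδ
    set K : (L → G) → (L → G) → ℂ := fun a b => O (δ b) a with hKdef
    have hrep : ∀ f : (L → G) → ℂ, O f = fun a => ∑ b, f b * K a b := by
      intro f
      have hf : f = ∑ b, f b • δ b := by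
        funext a'
        rw [Finset.sum_apply]
        simp [hδ, mul_ite, Finset.sum_ite_eq]
      calc O f = O (∑ b, f b • δ b) := by rw [← hf]
        _ = ∑ b, f b • O (δ b) := by rw [map_sum]; simp_rw [map_smul]
        _ = fun a => ∑ b, f b * K a b := by funext a; rw [Finset.sum_apply]; rfl
    have hUdelta : ∀ (g : V → G) (b : L → G),
        Ugauge s t g (δ b) = δ (fun ℓ => g (s ℓ) * b ℓ * (g (t ℓ))⁻¹) := by
      intro g b
      funext a
      simp only [Ugauge, hδ]
      refine if_congr ?_ rfl rfl
      rw [funext_iff, funext_iff]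
      exact forall_congr' fun ℓ => conj_eq_iff' (b ℓ) (a ℓ) (g (s ℓ)) (g (t ℓ))
    have hKinv : ∀ (g : V → G) (a b : L → G),
        K (fun ℓ => (g (s ℓ))⁻¹ * a ℓ * g (t ℓ)) b
          = K a (fun ℓ => g (s ℓ) * b ℓ * (g (t ℓ))⁻¹) := by
      intro g a b
      have h1 := congrFun (hcomm g) (δ b)
      simp only [Function.comp_apply, hUdelta] at h1
      have h2 := congrFun h1 a
      simp only [hKdef]
      rw [h2]
      rfl
    have hφmem : ∀ h : L → G,
        (fun a => K a (fun ℓ => (h ℓ)⁻¹ * a ℓ)) ∈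
          Submodule.span ℂ {f | ∃ μ, gaussMap s t μ = 1 ∧ f = charFun μ} := by
      intro h
      apply invariant_mem_span
      intro g a
      rw [hKinv g a (fun ℓ => (h ℓ)⁻¹ * ((g (s ℓ))⁻¹ * a ℓ * g (t ℓ)))]
      have harg2 : (fun ℓ => g (s ℓ) * ((h ℓ)⁻¹ * ((g (s ℓ))⁻¹ * a ℓ * g (t ℓ))) * (g (t ℓ))⁻¹)
          = fun ℓ => (h ℓ)⁻¹ * a ℓ := by
        funext ℓ
        rw [mul_assoc (g (s ℓ))⁻¹ (a ℓ) (g (t ℓ)), mul_left_comm (h ℓ)⁻¹ (g (s ℓ))⁻¹,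
          mul_inv_cancel_left, ← mul_assoc (h ℓ)⁻¹ (a ℓ) (g (t ℓ)), mul_inv_cancel_right]
      rw [harg2]
    have hsum : ⇑O = ∑ h : L → G,
        (fun f a => K a (fun ℓ => (h ℓ)⁻¹ * a ℓ) * f (fun ℓ => (h ℓ)⁻¹ * a ℓ)) := by
      funext f a
      rw [hrep f]
      rw [Finset.sum_apply, Finset.sum_apply]
      have hσ : Function.Involutive (fun b : L → G => a * b⁻¹) := by
        intro b; funext ℓ; simp [mul_comm]
      set e : (L → G) ≃ (L → G) := hσ.toPerm _ with he
      have harg : ∀ h : L → G, (fun ℓ => (h ℓ)⁻¹ * a ℓ) = e h := by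
        intro h; funext ℓ; simp [he, Function.Involutive.toPerm, mul_comm]
      calc ∑ b, f b * K a b = ∑ b, K a b * f b := by simp_rw [mul_comm]
        _ = ∑ h, K a (e h) * f (e h) := (Equiv.sum_comp e fun b => K a b * f b).symm
        _ = _ := by simp_rw [harg]
    rw [hsum]
    apply Submodule.sum_mem
    intro h _
    set M : ((L → G) → ℂ) →ₗ[ℂ] (((L → G) → ℂ) → ((L → G) → ℂ)) :=
      { toFun := fun φ => fun f a => φ a * f (fun ℓ => (h ℓ)⁻¹ * a ℓ),
        map_add' := by intros; funext f a; simp [add_mul],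
        map_smul' := by intros; funext f a; simp [mul_assoc] } with hM
    show M (fun a => K a (fun ℓ => (h ℓ)⁻¹ * a ℓ)) ∈ _
    have hmem := Submodule.mem_map_of_mem (f := M) (hφmem h)
    rw [Submodule.map_span] at hmem
    refine Submodule.span_mono ?_ hmem
    rintro x ⟨f', ⟨μ, hμ1, rfl⟩, rfl⟩
    refine ⟨fun ℓ => (μ ℓ)⁻¹, h, ?_, ?_⟩
    · have hginv : gaussMap s t (fun ℓ => (μ ℓ)⁻¹) = fun v => (gaussMap s t μ v)⁻¹ := by
        funext v
        ext x
        simp only [gaussMap, MonoidHom.mul_apply, MonoidHom.inv_apply,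
          MonoidHom.finset_prod_apply]
        rw [mul_inv, ← Finset.prod_inv_distrib, ← Finset.prod_inv_distrib]
      rw [hginv, hμ1]
      funext v
      ext x
      simp
    · funext f a
      have hu : ((((∏ ℓ, (μ ℓ)⁻¹ (a ℓ) : ℂˣ))⁻¹ : ℂˣ) : ℂ) = charFun μ a := by
        rw [charFun_coe]
        congr 1
        rw [← Finset.prod_inv_distrib]
        refine Finset.prod_congr rfl fun ℓ _ => ?_
        rw [MonoidHom.inv_apply, inv_inv]
      simp only [hM, LinearMap.coe_mk, AddHom.coe_mk, Function.comp_apply, Wline,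
        elecTrans, smul_eq_mul, hu]
  · -- easy direction
    intro hmem g
    refine Submodule.span_induction ?_ ?_ ?_ ?_ hmem
    · rintro F ⟨μ, h, hμ, rfl⟩
      funext f a
      simp only [Function.comp_apply, Wline, elecTrans, Ugauge, smul_eq_mul]
      have hw : (∏ ℓ, μ ℓ ((g (s ℓ))⁻¹ * a ℓ * g (t ℓ)) : ℂˣ) = ∏ ℓ, μ ℓ (a ℓ) := by
        rw [prod_act s t μ g a, hμ]
        simp
      rw [hw]
      have harg : (fun ℓ => (g (s ℓ))⁻¹ * ((h ℓ)⁻¹ * a ℓ) * g (t ℓ))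
          = fun ℓ => (h ℓ)⁻¹ * ((g (s ℓ))⁻¹ * a ℓ * g (t ℓ)) := by
        funext ℓ
        rw [mul_left_comm (g (s ℓ))⁻¹ (h ℓ)⁻¹, mul_assoc]
      rw [harg]
    · funext f a; simp [Ugauge]
    · intro F F' _ _ hF hF'
      funext f a
      have h1 := congrFun (congrFun hF f) a
      have h2 := congrFun (congrFun hF' f) a
      simp only [Function.comp_apply, Pi.add_apply, Ugauge] at h1 h2 ⊢
      rw [h1, h2]
    · intro r F _ hF
      funext f a
      have h1 := congrFun (congrFun hF f) a
      simp only [Function.comp_apply, Pi.smul_apply, smul_eq_mul, Ugauge] at h1 ⊢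
      rw [h1]
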